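/- arXiv:2111.03131 — 2 statements merged into one kernel-verified Lean document; each statement's English description precedes it below -/
import Mathlib

section
/- Assume a(ι) = b(ι) = 1 and let u ∈ V satisfy a(u) = 1 and b(u) = 0. Then for every n ≥ 1, Δ(u^{⊗(n−1)}) = Σ_{j=0}^{n} u^{⊗(j−1)} ⊗ u^{⊗(n−j−1)}, where u^{⊗(−1)} denotes 1 ∈ H_0 and u^{⊗0} denotes 1₁ ∈ H_1. (Thus the elements u^{⊗(n−1)} satisfy the defining coproduct rule of the complete homogeneous basis H_n of the noncommutative symmetric functions.) -/
open scoped TensorProduct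

noncomputable section

namespace PaperCHA

/-- Type synonym for the tensor algebra of `V`, to be equipped with the (non-unital)
`ι`-insertion multiplication `u ∘ v = u ⊗ ι ⊗ v`. -/
def IotaCore (V : Type) [AddCommGroup V] [Module ℂ V] (_iv : V) : Type := TensorAlgebra ℂ V

section Core

variable {V : Type} [AddCommGroup V] [Module ℂ V] {iv : V}

instance : AddCommGroup (IotaCore V iv) := inferInstanceAs (AddCommGroup (TensorAlgebra ℂ V))
instance : Module ℂ (IotaCore V iv) := inferInstanceAs (Module ℂ (TensorAlgebra ℂ V))

/-- The identity map, regarding an element of the tensor algebra as an element of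
`IotaCore V iv`. -/
def IotaCore.ofT (iv : V) : TensorAlgebra ℂ V → IotaCore V iv := id

/-- The identity map, regarding an element of `IotaCore V iv` as an element of the
tensor algebra. -/
def IotaCore.toT : IotaCore V iv → TensorAlgebra ℂ V := id

instance : NonUnitalRing (IotaCore V iv) :=
  { (inferInstanceAs (AddCommGroup (IotaCore V iv)) : AddCommGroup (IotaCore V iv)) with
    mul := fun u v => IotaCore.ofT iv (IotaCore.toT u * TensorAlgebra.ι ℂ iv * IotaCore.toT v)
    left_distrib := fun u v w => by
      show IotaCore.toT u * TensorAlgebra.ι ℂ iv * (IotaCore.toT v + IotaCore.toT w)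
          = IotaCore.toT u * TensorAlgebra.ι ℂ iv * IotaCore.toT v
            + IotaCore.toT u * TensorAlgebra.ι ℂ iv * IotaCore.toT w
      rw [mul_add]
    right_distrib := fun u v w => by
      show (IotaCore.toT u + IotaCore.toT v) * TensorAlgebra.ι ℂ iv * IotaCore.toT w
          = IotaCore.toT u * TensorAlgebra.ι ℂ iv * IotaCore.toT w
            + IotaCore.toT v * TensorAlgebra.ι ℂ iv * IotaCore.toT w
      rw [add_mul, add_mul]
    zero_mul := fun u => by
      show (0 : TensorAlgebra ℂ V) * TensorAlgebra.ι ℂ iv * IotaCore.toT u = 0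
      rw [zero_mul, zero_mul]
    mul_zero := fun u => by
      show IotaCore.toT u * TensorAlgebra.ι ℂ iv * (0 : TensorAlgebra ℂ V) = 0
      rw [mul_zero]
    mul_assoc := fun u v w => by
      show IotaCore.toT u * TensorAlgebra.ι ℂ iv * IotaCore.toT v * TensorAlgebra.ι ℂ iv
            * IotaCore.toT w
          = IotaCore.toT u * TensorAlgebra.ι ℂ iv
            * (IotaCore.toT v * TensorAlgebra.ι ℂ iv * IotaCore.toT w)
      simp only [mul_assoc] }

instance : SMulCommClass ℂ (IotaCore V iv) (IotaCore V iv) :=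
  ⟨fun c u v => by
    show c • (IotaCore.toT u * TensorAlgebra.ι ℂ iv * IotaCore.toT v)
        = IotaCore.toT u * TensorAlgebra.ι ℂ iv * (c • IotaCore.toT v)
    rw [mul_smul_comm]⟩

instance : IsScalarTower ℂ (IotaCore V iv) (IotaCore V iv) :=
  ⟨fun c u v => by
    show (c • IotaCore.toT u) * TensorAlgebra.ι ℂ iv * IotaCore.toT v
        = c • (IotaCore.toT u * TensorAlgebra.ι ℂ iv * IotaCore.toT v)
    rw [smul_mul_assoc, smul_mul_assoc]⟩

end Core

/-- The Hopf algebra `H_{(ι,a,b)}` of the paper, as a graded algebra: the unitalization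
of the tensor algebra of `V` equipped with the `ι`-insertion product.  Its `n`-th graded
component (`n ≥ 1`) is `V^{⊗(n-1)}`, and the `0`-th is `ℂ·1`. -/
abbrev HAlg (V : Type) [AddCommGroup V] [Module ℂ V] (iv : V) : Type :=
  Unitization ℂ (IotaCore V iv)

section HAlg

variable {V : Type} [AddCommGroup V] [Module ℂ V]

/-- The pure tensor `x₁ ⊗ ⋯ ⊗ x_{n-1} ∈ H_n` associated to a list `[x₁, …, x_{n-1}]`
(the empty list gives `1₁ ∈ H_1`). -/
def pt (iv : V) (l : List V) : HAlg V iv :=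
  Unitization.inr (IotaCore.ofT iv ((l.map (TensorAlgebra.ι ℂ)).prod))

/-- The grading of `H`: `grade iv 0 = ℂ·1` and `grade iv (n+1)` is the span of the
pure tensors of `n` vectors, i.e. `V^{⊗ n}`. -/
def grade (iv : V) : ℕ → Submodule ℂ (HAlg V iv)
  | 0 => Submodule.span ℂ {1}
  | (n + 1) => Submodule.span ℂ {x | ∃ l : List V, l.length = n ∧ x = pt iv l}

/-- The linear projection `ε : H → ℂ` onto the degree-zero component `H_0 = ℂ·1`. -/
def eps (iv : V) : HAlg V iv →ₗ[ℂ] ℂ :=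
  (Unitization.fstHom ℂ (IotaCore V iv)).toLinearMap

/-- Auxiliary function computing `T_φ(S; ψ)` on the sorted list `s₁ < ⋯ < s_k` of a
nonempty subset `S ⊆ {1, …, n}`: returns the scalar `c` (together with all scalar factors
`φ(ψ_{s_i})` coming from non-consecutive entries) and the list `[v₁, …, v_{k-1}]`. -/
def Tlist (iv : V) (φ : V →ₗ[ℂ] ℂ) (ψ : ℕ → V) (n : ℕ) : List ℕ → ℂ × List V
  | [] => (1, [])
  | [s] => (if s = n then 1 else φ (ψ s), [])
  | s :: t :: rest =>
    let p := Tlist iv φ ψ n (t :: rest)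
    if t = s + 1 then (p.1, ψ s :: p.2) else (φ (ψ s) * p.1, iv :: p.2)

/-- The element `T_φ(S; ψ) ∈ H` for a subset `S ⊆ {1, …, n}` (one gets `1 ∈ H_0` for
`S = ∅`, and `c • (v₁ ⊗ ⋯ ⊗ v_{k-1}) ∈ H_k` for `S = {s₁ < ⋯ < s_k}`). -/
def Tfun (iv : V) (φ : V →ₗ[ℂ] ℂ) (ψ : ℕ → V) (n : ℕ) (S : Finset ℕ) : HAlg V iv :=
  if S = ∅ then 1
  else (Tlist iv φ ψ n (S.sort (· ≤ ·))).1 • pt iv (Tlist iv φ ψ n (S.sort (· ≤ ·))).2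

/-- The indexing `ψ : {1, …, n} → V` (1-based) associated to a list `[ψ₁, …, ψ_{n-1}]`. -/
def psiOf (l : List V) : ℕ → V := fun j => l.getD (j - 1) 0

/-- The defining property of the coproduct `Δ` of `H_{(ι,a,b)}`: `Δ(1) = 1 ⊗ 1` and, on
a pure tensor `ψ = ψ₁ ⊗ ⋯ ⊗ ψ_{n-1} ∈ H_n`,
`Δ(ψ) = ∑_{A ⊆ {1,…,n}} T_a(A; ψ) ⊗ T_b(Aᶜ; ψ)`. -/
def DeltaSpec (iv : V) (a b : V →ₗ[ℂ] ℂ)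
    (Δ : HAlg V iv →ₗ[ℂ] HAlg V iv ⊗[ℂ] HAlg V iv) : Prop :=
  Δ 1 = 1 ⊗ₜ[ℂ] 1 ∧
  ∀ l : List V,
    Δ (pt iv l) =
      ∑ A ∈ (Finset.Icc 1 (l.length + 1)).powerset,
        Tfun iv a (psiOf l) (l.length + 1) A ⊗ₜ[ℂ]
          Tfun iv b (psiOf l) (l.length + 1) (Finset.Icc 1 (l.length + 1) \ A)

end HAlg

end PaperCHA


namespace PaperCHA

section AuxLemmas

variable {V : Type} [AddCommGroup V] [Module ℂ V]

theorem sort_Icc (m n : ℕ) : (Finset.Icc m n).sort (· ≤ ·) = List.range' m (n + 1 - m) := by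
  have h1 : Finset.Icc m n = (List.range' m (n + 1 - m)).toFinset := by
    rw [Nat.Icc_eq_range', List.toFinset_eq]
  rw [h1, (List.toFinset_sort _ List.nodup_range').2]
  exact List.Pairwise.imp Nat.le_of_lt List.pairwise_lt_range'

theorem Tlist_range' (iv : V) (φ : V →ₗ[ℂ] ℂ) (ψ : ℕ → V) (n : ℕ) (u : V)
    (hψ : ∀ j, 1 ≤ j → j + 1 ≤ n → ψ j = u) :
    ∀ k m, 1 ≤ m → m + k ≤ n → (m + k = n ∨ φ u = 1) →
      Tlist iv φ ψ n (List.range' m (k + 1)) = (1, List.replicate k u) := by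
  intro k
  induction k with
  | zero =>
    intro m h1 h2 hc
    show Tlist iv φ ψ n [m] = (1, [])
    simp only [Tlist]
    rcases hc with hc | hc
    · simp [show m = n by omega]
    · rcases eq_or_ne m n with h | h
      · simp [h]
      · rw [if_neg h, hψ m h1 (by omega), hc]
  | succ k ih =>
    intro m h1 h2 hc
    have hr : List.range' m (k + 1 + 1) = m :: List.range' (m + 1) (k + 1) :=
      List.range'_succ
    have hr2 : List.range' (m + 1) (k + 1) = (m + 1) :: List.range' (m + 2) k :=
      List.range'_succ
    rw [hr, hr2]
    have hp := ih (m + 1) (by omega) (by omega) (hc.imp (by omega) id)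
    rw [hr2] at hp
    simp only [Tlist, if_pos rfl, hp, hψ m h1 (by omega)]
    rfl

theorem Tlist_vanish (iv : V) (φ : V →ₗ[ℂ] ℂ) (ψ : ℕ → V) (n : ℕ) (u : V)
    (hψ : ∀ j, 1 ≤ j → j + 1 ≤ n → ψ j = u) (hu : φ u = 0) :
    ∀ L : List ℕ, L.Pairwise (· < ·) → (∀ s ∈ L, 1 ≤ s ∧ s ≤ n) →
      L = List.range' (n + 1 - L.length) L.length ∨ (Tlist iv φ ψ n L).1 = 0 := by
  intro L
  induction L with
  | nil => intro _ _; left; rfl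
  | cons s rest ih =>
    intro hsort hbd
    obtain ⟨hs1, hsn⟩ := hbd s List.mem_cons_self
    cases rest with
    | nil =>
      rcases eq_or_ne s n with h | h
      · left; simp [h]
      · right
        show (if s = n then (1:ℂ) else φ (ψ s)) = 0
        rw [if_neg h, hψ s hs1 (by omega), hu]
    | cons t rest2 =>
      have hst : s < t := (List.pairwise_cons.mp hsort).1 t List.mem_cons_self
      have htn : t ≤ n := (hbd t (by simp)).2
      rcases ih (List.pairwise_cons.mp hsort).2
          (fun x hx => hbd x (List.mem_cons_of_mem _ hx)) with h | h
      · have hlen : (t :: rest2).length = rest2.length + 1 := rfl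
        have ht : t = n + 1 - (rest2.length + 1) := by
          have := congrArg (fun l => l.headD 0) h
          simpa [hlen, List.range'_succ] using this
        have hk : rest2.length + 1 ≤ n := by omega
        rcases eq_or_ne t (s + 1) with hts | hts
        · left
          have hlen2 : (s :: t :: rest2).length = rest2.length + 2 := rfl
          rw [hlen2]
          have hs : s = n + 1 - (rest2.length + 2) := by omega
          rw [List.range'_succ, ← hs]
          congr 1
          rw [h, hlen]
          congr 1 <;> omega
        · right
          simp only [Tlist, if_neg hts]
          rw [hψ s hs1 (by omega), hu, zero_mul]
      · right
        simp only [Tlist]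
        split <;> simp [h]

end AuxLemmas

end PaperCHA

open PaperCHA in
/-- **The `H`-basis coproduct (Lemma 4.4, second case):** if `a(ι) = b(ι) = 1` and
`u ∈ V` satisfies `a(u) = 1`, `b(u) = 0`, then
`Δ(u^{⊗(n-1)}) = ∑_{j=0}^{n} u^{⊗(j-1)} ⊗ u^{⊗(n-j-1)}`, with `u^{⊗(-1)} = 1 ∈ H_0`;
these are the defining relations of the complete homogeneous generators of `NSym`. -/
theorem power_of_u_has_NSym_H_coproduct
    {V : Type} [AddCommGroup V] [Module ℂ V] (iv : V) (a b : V →ₗ[ℂ] ℂ)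
    (ha : a iv = 1) (hb : b iv = 1)
    (Δ : HAlg V iv →ₗ[ℂ] HAlg V iv ⊗[ℂ] HAlg V iv) (hΔ : DeltaSpec iv a b Δ)
    (u : V) (hua : a u = 1) (hub : b u = 0) :
    ∀ n : ℕ, 1 ≤ n →
      Δ (pt iv (List.replicate (n - 1) u))
        = ∑ j ∈ Finset.range (n + 1),
            (if j = 0 then (1 : HAlg V iv) else pt iv (List.replicate (j - 1) u)) ⊗ₜ[ℂ]
              (if j = n then (1 : HAlg V iv) else pt iv (List.replicate (n - j - 1) u)) := by
  intro n hn
  obtain ⟨m, rfl⟩ : ∃ m, n = m + 1 := ⟨n - 1, by omega⟩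
  classical
  set ψ := psiOf (List.replicate m u) with hψdef
  have hψ : ∀ j, 1 ≤ j → j + 1 ≤ m + 1 → ψ j = u := by
    intro j h1 h2
    have hlt : j - 1 < m := by omega
    simp [hψdef, psiOf, List.getD_eq_getElem?_getD, List.getElem?_replicate, hlt]
  have hmain := hΔ.2 (List.replicate m u)
  rw [List.length_replicate] at hmain
  simp only [Nat.add_sub_cancel]
  rw [← hψdef] at hmain
  rw [hmain]
  -- computation of the two factors on initial/tail intervals
  have Ta : ∀ j, 1 ≤ j → j ≤ m + 1 →
      Tfun iv a ψ (m + 1) (Finset.Icc 1 j) = pt iv (List.replicate (j - 1) u) := by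
    intro j h1 h2
    have hne : Finset.Icc 1 j ≠ ∅ := (Finset.nonempty_Icc.mpr h1).ne_empty
    have hs : (Finset.Icc 1 j).sort (· ≤ ·) = List.range' 1 ((j - 1) + 1) := by
      rw [sort_Icc]
      congr 1
      omega
    rw [Tfun, if_neg hne, hs,
      Tlist_range' iv a ψ (m + 1) u hψ (j - 1) 1 le_rfl (by omega) (Or.inr hua), one_smul]
  have Tb : ∀ j, j ≤ m →
      Tfun iv b ψ (m + 1) (Finset.Icc (j + 1) (m + 1)) = pt iv (List.replicate (m - j) u) := by
    intro j hj
    have hne : Finset.Icc (j + 1) (m + 1) ≠ ∅ :=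
      (Finset.nonempty_Icc.mpr (by omega)).ne_empty
    have hs : (Finset.Icc (j + 1) (m + 1)).sort (· ≤ ·) = List.range' (j + 1) ((m - j) + 1) := by
      rw [sort_Icc]
      congr 1
      omega
    rw [Tfun, if_neg hne, hs,
      Tlist_range' iv b ψ (m + 1) u hψ (m - j) (j + 1) (by omega) (by omega)
        (Or.inl (by omega)), one_smul]
  -- the vanishing of the terms not indexed by initial intervals
  have hvan : ∀ A ∈ (Finset.Icc 1 (m + 1)).powerset,
      A ∉ (Finset.range (m + 2)).image (fun j => Finset.Icc 1 j) →
      Tfun iv a ψ (m + 1) A ⊗ₜ[ℂ]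
        Tfun iv b ψ (m + 1) (Finset.Icc 1 (m + 1) \ A) = 0 := by
    intro A hA hAim
    have hAsub : A ⊆ Finset.Icc 1 (m + 1) := Finset.mem_powerset.mp hA
    set C := Finset.Icc 1 (m + 1) \ A with hC
    by_cases hCe : C = ∅
    · exfalso
      apply hAim
      have hAeq : A = Finset.Icc 1 (m + 1) :=
        le_antisymm hAsub (Finset.sdiff_eq_empty_iff_subset.mp hCe)
      exact Finset.mem_image.mpr ⟨m + 1, Finset.mem_range.mpr (by omega), hAeq.symm⟩
    · have hbd : ∀ s ∈ C.sort (· ≤ ·), 1 ≤ s ∧ s ≤ m + 1 := by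
        intro s hs
        have := Finset.mem_sdiff.mp ((Finset.mem_sort _).mp hs)
        exact Finset.mem_Icc.mp this.1
      rcases Tlist_vanish iv b ψ (m + 1) u hψ hub (C.sort (· ≤ ·))
          (Finset.sortedLT_sort C).pairwise hbd with h | h
      · exfalso
        apply hAim
        set k := (C.sort (· ≤ ·)).length with hkdef
        have hk : k = C.card := Finset.length_sort _
        have hkpos : 1 ≤ k := by
          rw [hk]
          exact Finset.card_pos.mpr (Finset.nonempty_iff_ne_empty.mpr hCe)
        have hkle : k ≤ m + 1 := by
          rw [hk]
          calc C.card ≤ (Finset.Icc 1 (m + 1)).card := Finset.card_le_card (Finset.sdiff_subset)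
          _ = m + 1 := by simp [Nat.card_Icc]
        have hCeq : C = Finset.Icc (m + 2 - k) (m + 1) := by
          have h2 : C = (C.sort (· ≤ ·)).toFinset := (Finset.sort_toFinset _ _).symm
          rw [h2, h]
          ext x
          simp only [List.mem_toFinset, List.mem_range'_1, Finset.mem_Icc]
          omega
        have hAeq : A = Finset.Icc 1 (m + 1 - k) := by
          have hA2 : A = Finset.Icc 1 (m + 1) \ C := by
            rw [hC, sdiff_sdiff_eq_self hAsub]
          rw [hA2, hCeq]
          ext x
          simp only [Finset.mem_sdiff, Finset.mem_Icc]
          omega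
        exact Finset.mem_image.mpr ⟨m + 1 - k, Finset.mem_range.mpr (by omega), hAeq.symm⟩
      · have hTb : Tfun iv b ψ (m + 1) C = 0 := by
          rw [Tfun, if_neg hCe, h, zero_smul]
        rw [hTb, TensorProduct.tmul_zero]
  rw [← Finset.sum_subset (by
      intro A hA
      obtain ⟨j, hj, rfl⟩ := Finset.mem_image.mp hA
      exact Finset.mem_powerset.mpr
        (Finset.Icc_subset_Icc_right (by have := Finset.mem_range.mp hj; omega))) hvan]
  rw [Finset.sum_image (by
      intro x hx y hy hxy
      have := congrArg Finset.card hxy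
      rw [Nat.card_Icc, Nat.card_Icc] at this
      omega)]
  apply Finset.sum_congr rfl
  intro j hj
  have hj' : j ≤ m + 1 := by
    have := Finset.mem_range.mp hj
    omega
  have hdiff : Finset.Icc 1 (m + 1) \ Finset.Icc 1 j = Finset.Icc (j + 1) (m + 1) := by
    ext x
    simp only [Finset.mem_sdiff, Finset.mem_Icc]
    omega
  rw [hdiff]
  have harg : m + 1 - j - 1 = m - j := by omega
  rw [harg]
  rcases eq_or_ne j 0 with rfl | hj0
  · rw [if_pos rfl, if_neg (by omega), Tb 0 (by omega)]
    have h0 : Finset.Icc 1 0 = ∅ := by simp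
    rw [h0, Tfun, if_pos rfl]
  · rw [if_neg hj0, Ta j (by omega) hj']
    rcases eq_or_ne j (m + 1) with rfl | hjm
    · rw [if_pos rfl]
      have h0 : Finset.Icc (m + 1 + 1) (m + 1) = ∅ := Finset.Icc_eq_empty (by omega)
      rw [h0, Tfun, if_pos rfl]
    · rw [if_neg hjm, Tb j (by omega)]
end
end

section
/- Fix n ≥ 1. Let T be the set of set compositions of {1,…,n} having at least one toggle point; for each element of T let j* denote its minimal toggle point, and write Splt (respectively Fusd) for the subset of T consisting of compositions whose minimal toggle point is a split (respectively fused) toggle. Then the map Φ that sends a composition (A_1,…,A_ℓ) ∈ Splt with minimal toggle point j* = max A_i to the composition (A_1,…,A_{i−1}, A_i ∪ A_{i+1}, A_{i+2},…,A_ℓ) is a well-defined bijection from Splt onto Fusd, and it decreases the number of blocks by exactly one: ℓ(Φ(A)) = ℓ(A) − 1. -/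
namespace PaperSetComp

/-- `L` is a set composition of `{1, …, n}`: a tuple of nonempty pairwise disjoint
subsets whose union is `{1, …, n}`. -/
def IsSetComposition (n : ℕ) (L : List (Finset ℕ)) : Prop :=
  (∀ A ∈ L, A.Nonempty) ∧ L.Pairwise Disjoint ∧ L.foldr (· ∪ ·) ∅ = Finset.Icc 1 n

/-- `j` is a split toggle point of `L`: for the block `A_k` containing `j`, `j = max A_k`,
`A_{k+1}` exists, and `min A_{k+1} > j + 1`. -/
def IsSplitToggle (L : List (Finset ℕ)) (j : ℕ) : Prop :=
  ∃ k : ℕ, k + 1 < L.length ∧ j ∈ L.getD k ∅ ∧ (∀ x ∈ L.getD k ∅, x ≤ j) ∧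
    ∀ y ∈ L.getD (k + 1) ∅, j + 1 < y

/-- `j` is a fused toggle point of `L`: for the block `A_k` containing `j`, `j < max A_k`
and `j + 1 ∉ A_k`. -/
def IsFusedToggle (L : List (Finset ℕ)) (j : ℕ) : Prop :=
  ∃ k : ℕ, k < L.length ∧ j ∈ L.getD k ∅ ∧ (∃ x ∈ L.getD k ∅, j < x) ∧ j + 1 ∉ L.getD k ∅

/-- `j` is a toggle point of `L`. -/
def IsToggle (L : List (Finset ℕ)) (j : ℕ) : Prop :=
  IsSplitToggle L j ∨ IsFusedToggle L j

end PaperSetComp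

namespace PaperSetComp

/-- `j` is the minimal toggle point of `L`. -/
def IsMinToggle (L : List (Finset ℕ)) (j : ℕ) : Prop :=
  IsToggle L j ∧ ∀ j' : ℕ, IsToggle L j' → j ≤ j'

/-- Set compositions of `{1, …, n}` whose minimal toggle point is a split toggle. -/
def Splt (n : ℕ) : Set (List (Finset ℕ)) :=
  {L | IsSetComposition n L ∧ ∃ j : ℕ, IsMinToggle L j ∧ IsSplitToggle L j}

/-- Set compositions of `{1, …, n}` whose minimal toggle point is a fused toggle. -/
def Fusd (n : ℕ) : Set (List (Finset ℕ)) :=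
  {L | IsSetComposition n L ∧ ∃ j : ℕ, IsMinToggle L j ∧ IsFusedToggle L j}

/-- Merge the `k`-th and `(k+1)`-st blocks of `L`. -/
def mergeAt (L : List (Finset ℕ)) (k : ℕ) : List (Finset ℕ) :=
  L.take k ++ (L.getD k ∅ ∪ L.getD (k + 1) ∅) :: L.drop (k + 2)

end PaperSetComp

namespace PaperSetComp

/-- Insert two blocks in place of one. -/
def splitAt' (L : List (Finset ℕ)) (k : ℕ) (C D : Finset ℕ) : List (Finset ℕ) :=
  L.take k ++ C :: D :: L.drop (k + 1)

variable {L l₁ l₂ M : List (Finset ℕ)} {k i j m n : ℕ} {C D a : Finset ℕ}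

lemma getD_empty_of_le (h : L.length ≤ i) : L.getD i ∅ = ∅ := by
  rw [List.getD_eq_getElem?_getD, List.getElem?_eq_none (by omega), Option.getD_none]

lemma getD_take (hi : i < k) : (L.take k).getD i ∅ = L.getD i ∅ := by
  rw [List.getD_eq_getElem?_getD, List.getD_eq_getElem?_getD, List.getElem?_take, if_pos hi]

lemma getD_drop : (L.drop m).getD i ∅ = L.getD (m + i) ∅ := by
  rw [List.getD_eq_getElem?_getD, List.getD_eq_getElem?_getD, List.getElem?_drop]

lemma getD_append_cons :
    (l₁ ++ a :: l₂).getD i ∅ =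
      if i < l₁.length then l₁.getD i ∅
      else if i = l₁.length then a else l₂.getD (i - l₁.length - 1) ∅ := by
  split_ifs with h1 h2
  · rw [List.getD_eq_getElem?_getD, List.getD_eq_getElem?_getD,
      List.getElem?_append_left h1]
  · rw [List.getD_eq_getElem?_getD, List.getElem?_append_right (by omega), h2]
    simp
  · rw [List.getD_eq_getElem?_getD, List.getD_eq_getElem?_getD,
      List.getElem?_append_right (by omega)]
    rw [show i - l₁.length = (i - l₁.length - 1) + 1 from by omega,
      List.getElem?_cons_succ]
    simp only [← List.getD_eq_getElem?_getD]
    norm_num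

lemma mergeAt_length (hk : k + 1 < L.length) : (mergeAt L k).length = L.length - 1 := by
  simp [mergeAt]; omega

lemma mergeAt_getD_lt (hk : k + 1 < L.length) (hi : i < k) :
    (mergeAt L k).getD i ∅ = L.getD i ∅ := by
  rw [mergeAt, getD_append_cons, if_pos (by simp; omega), getD_take hi]

lemma mergeAt_getD_eq (hk : k + 1 < L.length) :
    (mergeAt L k).getD k ∅ = L.getD k ∅ ∪ L.getD (k + 1) ∅ := by
  rw [mergeAt, getD_append_cons, if_neg (by simp), if_pos (by simp; omega)]

lemma mergeAt_getD_gt (hk : k + 1 < L.length) (hi : k < i) :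
    (mergeAt L k).getD i ∅ = L.getD (i + 1) ∅ := by
  have hlt : (L.take k).length = k := by simp; omega
  rw [mergeAt, getD_append_cons, if_neg (by omega), if_neg (by omega), getD_drop, hlt]
  congr 1; omega

lemma splitAt'_length (hk : k < L.length) : (splitAt' L k C D).length = L.length + 1 := by
  simp [splitAt']; omega

lemma splitAt'_getD_lt (hk : k < L.length) (hi : i < k) :
    (splitAt' L k C D).getD i ∅ = L.getD i ∅ := by
  rw [splitAt', getD_append_cons, if_pos (by simp; omega), getD_take hi]

lemma splitAt'_getD_k (hk : k < L.length) : (splitAt' L k C D).getD k ∅ = C := by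
  rw [splitAt', getD_append_cons, if_neg (by simp), if_pos (by simp; omega)]

lemma splitAt'_getD_k1 (hk : k < L.length) : (splitAt' L k C D).getD (k + 1) ∅ = D := by
  have hlt : (L.take k).length = k := by simp; omega
  rw [splitAt', getD_append_cons, if_neg (by omega), if_neg (by omega), hlt]
  have : k + 1 - k - 1 = 0 := by omega
  rw [this]; rfl

lemma splitAt'_getD_gt (hk : k < L.length) (hi : k + 1 < i) :
    (splitAt' L k C D).getD i ∅ = L.getD (i - 1) ∅ := by
  have hlt : (L.take k).length = k := by simp; omega
  rw [splitAt', getD_append_cons, if_neg (by omega), if_neg (by omega), hlt]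
  have : i - k - 1 = (i - k - 2) + 1 := by omega
  rw [this, List.getD_cons_succ, getD_drop]
  congr 1; omega

lemma mergeAt_splitAt' (hk : k < L.length) (hCD : C ∪ D = L.getD k ∅) :
    mergeAt (splitAt' L k C D) k = L := by
  have hlt : (L.take k).length = k := by simp; omega
  have h1 : (splitAt' L k C D).take k = L.take k := by
    rw [splitAt', List.take_append_of_le_length (by omega), List.take_take, Nat.min_self]
  have h2 : (splitAt' L k C D).drop (k + 2) = L.drop (k + 1) := by
    rw [splitAt', List.drop_append, hlt,
      List.drop_eq_nil_of_le (by omega : (L.take k).length ≤ k + 2)]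
    have : k + 2 - k = 2 := by omega
    rw [this]; rfl
  rw [mergeAt, h1, h2, splitAt'_getD_k hk, splitAt'_getD_k1 hk, hCD,
    List.getD_eq_getElem _ ∅ hk, ← List.drop_eq_getElem_cons hk, List.take_append_drop]

lemma splitAt'_mergeAt (hk : k + 1 < L.length) :
    splitAt' (mergeAt L k) k (L.getD k ∅) (L.getD (k + 1) ∅) = L := by
  have hlt : (L.take k).length = k := by simp; omega
  have h1 : (mergeAt L k).take k = L.take k := by
    rw [mergeAt, List.take_append_of_le_length (by omega), List.take_take, Nat.min_self]
  have h2 : (mergeAt L k).drop (k + 1) = L.drop (k + 2) := by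
    rw [mergeAt, List.drop_append, hlt,
      List.drop_eq_nil_of_le (by omega : (L.take k).length ≤ k + 1)]
    have : k + 1 - k = 1 := by omega
    rw [this]; rfl
  rw [splitAt', h1, h2,
    List.getD_eq_getElem _ ∅ (by omega : k + 1 < L.length),
    ← List.drop_eq_getElem_cons (by omega : k + 1 < L.length),
    List.getD_eq_getElem _ ∅ (by omega : k < L.length),
    ← List.drop_eq_getElem_cons (by omega : k < L.length), List.take_append_drop]

lemma pairwise_getD (hpw : L.Pairwise Disjoint) (hij : i ≠ j) :
    Disjoint (L.getD i ∅) (L.getD j ∅) := by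
  rcases le_or_gt L.length i with hi | hi
  · rw [getD_empty_of_le hi]; exact Finset.disjoint_empty_left _
  rcases le_or_gt L.length j with hj | hj
  · rw [getD_empty_of_le hj]; exact Finset.disjoint_empty_right _
  rw [List.getD_eq_getElem _ ∅ hi, List.getD_eq_getElem _ ∅ hj]
  rcases hij.lt_or_gt with h | h
  · exact List.pairwise_iff_getElem.mp hpw i j hi hj h
  · exact (List.pairwise_iff_getElem.mp hpw j i hj hi h).symm

lemma getD_mem (h : i < L.length) : L.getD i ∅ ∈ L := by
  rw [List.getD_eq_getElem _ ∅ h]; exact List.getElem_mem h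

lemma block_unique (hpw : L.Pairwise Disjoint) (h1 : j ∈ L.getD i ∅) (h2 : j ∈ L.getD k ∅) :
    i = k := by
  by_contra h
  exact Finset.disjoint_left.mp (pairwise_getD hpw h) h1 h2

lemma pairwise_of_getD (M : List (Finset ℕ))
    (h : ∀ i j, i < j → j < M.length → Disjoint (M.getD i ∅) (M.getD j ∅)) :
    M.Pairwise Disjoint := by
  rw [List.pairwise_iff_getElem]
  intro i j hi hj hij
  have := h i j hij hj
  rwa [List.getD_eq_getElem _ ∅ (by omega), List.getD_eq_getElem _ ∅ hj] at this

end PaperSetComp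

namespace PaperSetComp

variable {L M : List (Finset ℕ)} {k j n : ℕ} {C D : Finset ℕ}


lemma foldr_union_seed (l : List (Finset ℕ)) (s : Finset ℕ) :
    l.foldr (· ∪ ·) s = l.foldr (· ∪ ·) ∅ ∪ s := by
  induction l with
  | nil => simp
  | cons a t ih => simp [ih, Finset.union_assoc]

lemma foldr_split (hk : k < L.length) :
    L.foldr (· ∪ ·) ∅ =
      (L.take k).foldr (· ∪ ·) ∅ ∪ (L.getD k ∅ ∪ (L.drop (k+1)).foldr (· ∪ ·) ∅) := by
  conv_lhs => rw [← List.take_append_drop k L, List.drop_eq_getElem_cons hk]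
  rw [List.foldr_append, List.foldr_cons, List.getD_eq_getElem _ ∅ hk, foldr_union_seed]

lemma comp_merge (hc : IsSetComposition n L) (hk : k + 1 < L.length) :
    IsSetComposition n (mergeAt L k) := by
  obtain ⟨hne, hpw, hun⟩ := hc
  refine ⟨?_, ?_, ?_⟩
  · intro A hA
    rw [mergeAt] at hA
    rcases List.mem_append.mp hA with h | h
    · exact hne A (List.take_subset _ _ h)
    rcases List.mem_cons.mp h with h | h
    · subst h
      exact (hne _ (getD_mem (by omega))).mono Finset.subset_union_left
    · exact hne A (List.drop_subset _ _ h)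
  · apply pairwise_of_getD
    intro i j hij hj
    rcases lt_trichotomy i k with hi | hi | hi
    · rw [mergeAt_getD_lt hk hi]
      rcases lt_trichotomy j k with hj' | hj' | hj'
      · rw [mergeAt_getD_lt hk hj']; exact pairwise_getD hpw (by omega)
      · subst hj'; rw [mergeAt_getD_eq hk]
        exact Finset.disjoint_union_right.mpr
          ⟨pairwise_getD hpw (by omega), pairwise_getD hpw (by omega)⟩
      · rw [mergeAt_getD_gt hk hj']; exact pairwise_getD hpw (by omega)
    · subst hi; rw [mergeAt_getD_eq hk, mergeAt_getD_gt hk hij]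
      exact Finset.disjoint_union_left.mpr
        ⟨pairwise_getD hpw (by omega), pairwise_getD hpw (by omega)⟩
    · rw [mergeAt_getD_gt hk hi, mergeAt_getD_gt hk (by omega)]
      exact pairwise_getD hpw (by omega)
  · rw [← hun, mergeAt, List.foldr_append, List.foldr_cons, foldr_union_seed]
    conv_rhs => rw [foldr_split (by omega : k < L.length),
      foldr_split (show k + 1 - (k+1) < (L.drop (k+1)).length by simp; omega)]
    simp only [Nat.sub_self, List.take_zero, List.foldr_nil, Finset.empty_union,
      Nat.add_zero, List.drop_drop]
    rw [show k + 1 + (0 + 1) = k + 2 from by omega]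
    simp [Finset.union_assoc]

lemma comp_split (hc : IsSetComposition n L) (hk : k < L.length)
    (hCD : C ∪ D = L.getD k ∅) (hdisj : Disjoint C D) (hCne : C.Nonempty) (hDne : D.Nonempty) :
    IsSetComposition n (splitAt' L k C D) := by
  obtain ⟨hne, hpw, hun⟩ := hc
  have hCsub : C ⊆ L.getD k ∅ := hCD ▸ Finset.subset_union_left
  have hDsub : D ⊆ L.getD k ∅ := hCD ▸ Finset.subset_union_right
  refine ⟨?_, ?_, ?_⟩
  · intro A hA
    rw [splitAt'] at hA
    rcases List.mem_append.mp hA with h | h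
    · exact hne A (List.take_subset _ _ h)
    rcases List.mem_cons.mp h with h | h
    · exact h ▸ hCne
    rcases List.mem_cons.mp h with h | h
    · exact h ▸ hDne
    · exact hne A (List.drop_subset _ _ h)
  · apply pairwise_of_getD
    intro i j hij hj
    rw [splitAt'_length hk] at hj
    rcases lt_trichotomy i k with hi | hi | hi
    · rw [splitAt'_getD_lt hk hi]
      rcases lt_trichotomy j k with hj' | hj' | hj'
      · rw [splitAt'_getD_lt hk hj']; exact pairwise_getD hpw (by omega)
      · rw [hj', splitAt'_getD_k hk]
        exact (pairwise_getD hpw (show i ≠ k by omega)).mono_right hCsub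
      · rcases eq_or_lt_of_le (show k + 1 ≤ j from hj') with hj'' | hj''
        · rw [← hj'', splitAt'_getD_k1 hk]
          exact (pairwise_getD hpw (show i ≠ k by omega)).mono_right hDsub
        · rw [splitAt'_getD_gt hk hj'']
          exact pairwise_getD hpw (by omega)
    · rw [hi, splitAt'_getD_k hk]
      rcases eq_or_lt_of_le (show i + 1 ≤ j from hij) with hj'' | hj''
      · rw [← hj'', hi, splitAt'_getD_k1 hk]; exact hdisj
      · rw [splitAt'_getD_gt hk (by omega)]
        exact (pairwise_getD hpw (show k ≠ j - 1 by omega)).mono_left hCsub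
    · rcases eq_or_lt_of_le (show k + 1 ≤ i from hi) with hi' | hi'
      · rw [← hi', splitAt'_getD_k1 hk, splitAt'_getD_gt hk (by omega)]
        exact (pairwise_getD hpw (show k ≠ j - 1 by omega)).mono_left hDsub
      · rw [splitAt'_getD_gt hk (by omega), splitAt'_getD_gt hk (by omega)]
        exact pairwise_getD hpw (by omega)
  · rw [← hun, splitAt', List.foldr_append, List.foldr_cons, List.foldr_cons,
      foldr_union_seed]
    conv_rhs => rw [foldr_split hk]
    rw [← hCD]
    simp [Finset.union_assoc]


lemma toggle_merge_iff (hk : k + 1 < L.length) (hj : j ∈ L.getD k ∅)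
    (hmax : ∀ x ∈ L.getD k ∅, x ≤ j) (hmin : ∀ y ∈ L.getD (k + 1) ∅, j + 1 < y)
    {j' : ℕ} (hj' : j' < j) : IsToggle (mergeAt L k) j' ↔ IsToggle L j' := by
  have hlen : (mergeAt L k).length = L.length - 1 := mergeAt_length hk
  constructor
  · rintro (⟨i, hi1, hi2, hi3, hi4⟩ | ⟨i, hi1, hi2, hi3, hi4⟩)
    · -- split toggle of merge
      rcases lt_trichotomy i k with hc | hc | hc
      · rw [mergeAt_getD_lt hk hc] at hi2 hi3
        refine Or.inl ⟨i, by omega, hi2, hi3, ?_⟩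
        intro y hy
        apply hi4
        by_cases hc2 : i + 1 < k
        · rwa [mergeAt_getD_lt hk hc2]
        · have he : i + 1 = k := by omega
          rw [he] at hy
          rw [he, mergeAt_getD_eq hk]
          exact Finset.mem_union_left _ hy
      · subst hc
        rw [mergeAt_getD_eq hk] at hi3
        exact absurd (hi3 j (Finset.mem_union_left _ hj)) (by omega)
      · rw [mergeAt_getD_gt hk hc] at hi2 hi3
        rw [mergeAt_getD_gt hk (by omega)] at hi4
        exact Or.inl ⟨i + 1, by omega, hi2, hi3, hi4⟩
    · -- fused toggle of merge
      rcases lt_trichotomy i k with hc | hc | hc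
      · rw [mergeAt_getD_lt hk hc] at hi2 hi3 hi4
        exact Or.inr ⟨i, by omega, hi2, hi3, hi4⟩
      · subst hc
        rw [mergeAt_getD_eq hk] at hi2 hi4
        have hjk : j' ∈ L.getD i ∅ := by
          rcases Finset.mem_union.mp hi2 with h | h
          · exact h
          · exact absurd (hmin j' h) (by omega)
        refine Or.inr ⟨i, by omega, hjk, ⟨j, hj, hj'⟩, fun h => hi4 (Finset.mem_union_left _ h)⟩
      · rw [mergeAt_getD_gt hk hc] at hi2 hi3 hi4
        exact Or.inr ⟨i + 1, by omega, hi2, hi3, hi4⟩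
  · rintro (⟨i, hi1, hi2, hi3, hi4⟩ | ⟨i, hi1, hi2, hi3, hi4⟩)
    · -- split toggle of L
      rcases lt_trichotomy i k with hc | hc | hc
      · refine Or.inl ⟨i, by omega, ?_, ?_, ?_⟩
        · rwa [mergeAt_getD_lt hk hc]
        · rwa [mergeAt_getD_lt hk hc]
        · intro y hy
          by_cases hc2 : i + 1 < k
          · rw [mergeAt_getD_lt hk hc2] at hy
            exact hi4 y hy
          · have he : i + 1 = k := by omega
            rw [he, mergeAt_getD_eq hk] at hy
            rcases Finset.mem_union.mp hy with h | h
            · exact hi4 y (he ▸ h)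
            · exact lt_of_le_of_lt (by omega) (hmin y h)
      · subst hc
        exact absurd (hi3 j hj) (by omega)
      · rcases eq_or_lt_of_le (show k + 1 ≤ i from hc) with hc2 | hc2
        · rw [← hc2] at hi2
          exact absurd (hmin j' hi2) (by omega)
        · refine Or.inl ⟨i - 1, by omega, ?_, ?_, ?_⟩
          · rwa [mergeAt_getD_gt hk (by omega), show i - 1 + 1 = i from by omega]
          · rwa [mergeAt_getD_gt hk (by omega), show i - 1 + 1 = i from by omega]
          · rwa [show i - 1 + 1 = i from by omega, mergeAt_getD_gt hk (by omega)]
    · -- fused toggle of L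
      rcases lt_trichotomy i k with hc | hc | hc
      · refine Or.inr ⟨i, by omega, ?_, ?_, ?_⟩ <;> rw [mergeAt_getD_lt hk hc]
        · exact hi2
        · exact hi3
        · exact hi4
      · subst hc
        refine Or.inr ⟨i, by omega, ?_, ?_, ?_⟩
        · rw [mergeAt_getD_eq hk]; exact Finset.mem_union_left _ hi2
        · obtain ⟨x, hx, hx2⟩ := hi3
          exact ⟨x, by rw [mergeAt_getD_eq hk]; exact Finset.mem_union_left _ hx, hx2⟩
        · rw [mergeAt_getD_eq hk]
          intro h
          rcases Finset.mem_union.mp h with h | h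
          · exact hi4 h
          · exact absurd (hmin _ h) (by omega)
      · rcases eq_or_lt_of_le (show k + 1 ≤ i from hc) with hc2 | hc2
        · rw [← hc2] at hi2
          exact absurd (hmin j' hi2) (by omega)
        · refine Or.inr ⟨i - 1, by omega, ?_, ?_, ?_⟩ <;>
            rw [mergeAt_getD_gt hk (by omega), show i - 1 + 1 = i from by omega]
          · exact hi2
          · exact hi3
          · exact hi4


end PaperSetComp

namespace PaperSetComp

variable {L M : List (Finset ℕ)} {k j n : ℕ}

lemma minToggle_unique (h1 : IsMinToggle L j) {j' : ℕ} (h2 : IsMinToggle L j') : j = j' :=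
  le_antisymm (h1.2 _ h2.1) (h2.2 _ h1.1)

open Classical in
/-- The merging map. -/
noncomputable def phi (L : List (Finset ℕ)) : List (Finset ℕ) :=
  if h : ∃ p : ℕ × ℕ, IsMinToggle L p.1 ∧ p.2 < L.length ∧ p.1 ∈ L.getD p.2 ∅ then
    mergeAt L h.choose.2
  else L

open Classical in
/-- The splitting map. -/
noncomputable def psi (M : List (Finset ℕ)) : List (Finset ℕ) :=
  if h : ∃ p : ℕ × ℕ, IsMinToggle M p.1 ∧ p.2 < M.length ∧ p.1 ∈ M.getD p.2 ∅ then
    splitAt' M h.choose.2 ((M.getD h.choose.2 ∅).filter (· ≤ h.choose.1))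
      ((M.getD h.choose.2 ∅).filter (h.choose.1 < ·))
  else M

lemma phi_eq (hpw : L.Pairwise Disjoint) (hmin : IsMinToggle L j) (hk : k < L.length)
    (hjk : j ∈ L.getD k ∅) : phi L = mergeAt L k := by
  have h : ∃ p : ℕ × ℕ, IsMinToggle L p.1 ∧ p.2 < L.length ∧ p.1 ∈ L.getD p.2 ∅ :=
    ⟨(j, k), hmin, hk, hjk⟩
  rw [phi]
  rw [dif_pos h]
  obtain ⟨h1, h2, h3⟩ := h.choose_spec
  have hj : h.choose.1 = j := minToggle_unique h1 hmin
  rw [hj] at h3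
  have hk2 : h.choose.2 = k := block_unique hpw h3 hjk
  rw [hk2]

lemma psi_eq (hpw : M.Pairwise Disjoint) (hmin : IsMinToggle M j) (hk : k < M.length)
    (hjk : j ∈ M.getD k ∅) :
    psi M = splitAt' M k ((M.getD k ∅).filter (· ≤ j)) ((M.getD k ∅).filter (j < ·)) := by
  have h : ∃ p : ℕ × ℕ, IsMinToggle M p.1 ∧ p.2 < M.length ∧ p.1 ∈ M.getD p.2 ∅ :=
    ⟨(j, k), hmin, hk, hjk⟩
  rw [psi]
  rw [dif_pos h]
  obtain ⟨h1, h2, h3⟩ := h.choose_spec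
  have hj : h.choose.1 = j := minToggle_unique h1 hmin
  rw [hj] at h3
  have hk2 : h.choose.2 = k := block_unique hpw h3 hjk
  rw [hk2, hj]

lemma merge_spec (hc : IsSetComposition n L) (hmin : IsMinToggle L j) (hk : k + 1 < L.length)
    (hjk : j ∈ L.getD k ∅) (hmax : ∀ x ∈ L.getD k ∅, x ≤ j)
    (hmn : ∀ y ∈ L.getD (k + 1) ∅, j + 1 < y) :
    IsSetComposition n (mergeAt L k) ∧ IsMinToggle (mergeAt L k) j ∧
      IsFusedToggle (mergeAt L k) j := by
  have hcomp := comp_merge hc hk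
  have hfused : IsFusedToggle (mergeAt L k) j := by
    refine ⟨k, ?_, ?_, ?_, ?_⟩
    · rw [mergeAt_length hk]; omega
    · rw [mergeAt_getD_eq hk]; exact Finset.mem_union_left _ hjk
    · obtain ⟨x, hx⟩ := hc.1 _ (getD_mem (show k + 1 < L.length by omega))
      refine ⟨x, ?_, ?_⟩
      · rw [mergeAt_getD_eq hk]; exact Finset.mem_union_right _ hx
      · have := hmn x hx; omega
    · rw [mergeAt_getD_eq hk]
      intro h
      rcases Finset.mem_union.mp h with h | h
      · exact absurd (hmax _ h) (by omega)
      · exact absurd (hmn _ h) (by omega)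
  refine ⟨hcomp, ⟨Or.inr hfused, ?_⟩, hfused⟩
  intro j'' ht
  by_contra hlt
  push_neg at hlt
  exact absurd (hmin.2 _ ((toggle_merge_iff hk hjk hmax hmn hlt).mp ht)) (by omega)

lemma split_spec (hc : IsSetComposition n M) (hmin : IsMinToggle M j) (hk : k < M.length)
    (hjk : j ∈ M.getD k ∅) (hx : ∃ x ∈ M.getD k ∅, j < x) (hnm : j + 1 ∉ M.getD k ∅) :
    IsSetComposition n
        (splitAt' M k ((M.getD k ∅).filter (· ≤ j)) ((M.getD k ∅).filter (j < ·))) ∧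
      IsMinToggle
        (splitAt' M k ((M.getD k ∅).filter (· ≤ j)) ((M.getD k ∅).filter (j < ·))) j ∧
      IsSplitToggle
        (splitAt' M k ((M.getD k ∅).filter (· ≤ j)) ((M.getD k ∅).filter (j < ·))) j ∧
      mergeAt (splitAt' M k ((M.getD k ∅).filter (· ≤ j)) ((M.getD k ∅).filter (j < ·))) k
        = M := by
  set C := (M.getD k ∅).filter (· ≤ j) with hC
  set D := (M.getD k ∅).filter (j < ·) with hD
  set N := splitAt' M k C D with hN
  have hCD : C ∪ D = M.getD k ∅ := by
    ext x
    simp only [hC, hD, Finset.mem_union, Finset.mem_filter]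
    rcases le_or_gt x j with h | h <;> tauto
  have hdisj : Disjoint C D := Finset.disjoint_left.mpr fun x hx1 hx2 => by
    rw [hC, Finset.mem_filter] at hx1
    rw [hD, Finset.mem_filter] at hx2
    omega
  have hCne : C.Nonempty := ⟨j, by rw [hC, Finset.mem_filter]; exact ⟨hjk, le_refl j⟩⟩
  have hDne : D.Nonempty := by
    obtain ⟨x, hx1, hx2⟩ := hx
    exact ⟨x, by rw [hD, Finset.mem_filter]; exact ⟨hx1, hx2⟩⟩
  have hcomp := comp_split hc hk hCD hdisj hCne hDne
  have hNk : N.getD k ∅ = C := splitAt'_getD_k hk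
  have hNk1 : N.getD (k + 1) ∅ = D := splitAt'_getD_k1 hk
  have hjN : j ∈ N.getD k ∅ := by
    rw [hNk, hC, Finset.mem_filter]; exact ⟨hjk, le_refl j⟩
  have hmaxN : ∀ x ∈ N.getD k ∅, x ≤ j := by
    intro x hxm; rw [hNk, hC, Finset.mem_filter] at hxm; exact hxm.2
  have hmnN : ∀ y ∈ N.getD (k + 1) ∅, j + 1 < y := by
    intro y hy
    rw [hNk1, hD, Finset.mem_filter] at hy
    rcases hy with ⟨hy1, hy2⟩
    rcases eq_or_lt_of_le (show j + 1 ≤ y by omega) with h | h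
    · exact absurd (h ▸ hy1) hnm
    · exact h
  have hkN : k + 1 < N.length := by rw [hN, splitAt'_length hk]; omega
  have hME : mergeAt N k = M := mergeAt_splitAt' hk hCD
  have hsplit : IsSplitToggle N j := ⟨k, hkN, hjN, hmaxN, hmnN⟩
  refine ⟨hcomp, ⟨Or.inl hsplit, ?_⟩, hsplit, hME⟩
  intro j'' ht
  by_contra hlt
  push_neg at hlt
  have := (toggle_merge_iff hkN hjN hmaxN hmnN hlt).mpr ht
  rw [hME] at this
  exact absurd (hmin.2 _ this) (by omega)

end PaperSetComp


open PaperSetComp in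
/-- **Sign-reversing bijection of Section 5.2:** the map `Φ` sending a set composition
`(A₁,…,A_ℓ) ∈ Splt`, whose minimal toggle point `j*` satisfies `j* = max A_i`, to
`(A₁,…,A_{i-1}, A_i ∪ A_{i+1}, A_{i+2},…,A_ℓ)`, is a well-defined bijection from `Splt`
onto `Fusd` decreasing the number of blocks by exactly one. -/
theorem split_fused_toggle_bijection (n : ℕ) (hn : 1 ≤ n) :
    ∃ Φ : List (Finset ℕ) → List (Finset ℕ),
      (∀ L ∈ Splt n, ∀ j k : ℕ, IsMinToggle L j → k < L.length → j ∈ L.getD k ∅ →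
        Φ L = mergeAt L k) ∧
      Set.BijOn Φ (Splt n) (Fusd n) ∧
      ∀ L ∈ Splt n, (Φ L).length = L.length - 1 := by
  classical
  refine ⟨phi, ?_, ?_, ?_⟩
  · intro L hL j k hmin hk hjk
    exact phi_eq hL.1.2.1 hmin hk hjk
  · have hmaps1 : Set.MapsTo phi (Splt n) (Fusd n) := by
      intro L hL
      obtain ⟨hc, j, hmin, k, hk, hjk, hmax, hmn⟩ := hL
      rw [phi_eq hc.2.1 hmin (by omega) hjk]
      obtain ⟨h1, h2, h3⟩ := merge_spec hc hmin hk hjk hmax hmn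
      exact ⟨h1, j, h2, h3⟩
    have hmaps2 : Set.MapsTo psi (Fusd n) (Splt n) := by
      intro M hM
      obtain ⟨hc, j, hmin, k, hk, hjk, hx, hnm⟩ := hM
      rw [psi_eq hc.2.1 hmin hk hjk]
      obtain ⟨h1, h2, h3, _⟩ := split_spec hc hmin hk hjk hx hnm
      exact ⟨h1, j, h2, h3⟩
    refine Set.InvOn.bijOn ⟨?_, ?_⟩ hmaps1 hmaps2
    · -- LeftInvOn psi phi (Splt n)
      intro L hL
      obtain ⟨hc, j, hmin, k, hk, hjk, hmax, hmn⟩ := hL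
      rw [phi_eq hc.2.1 hmin (by omega) hjk]
      obtain ⟨hc', hmin', hfused'⟩ := merge_spec hc hmin hk hjk hmax hmn
      have hkM : k < (mergeAt L k).length := by rw [mergeAt_length hk]; omega
      have hjM : j ∈ (mergeAt L k).getD k ∅ := by
        rw [mergeAt_getD_eq hk]; exact Finset.mem_union_left _ hjk
      rw [psi_eq hc'.2.1 hmin' hkM hjM]
      have hMk : (mergeAt L k).getD k ∅ = L.getD k ∅ ∪ L.getD (k + 1) ∅ :=
        mergeAt_getD_eq hk
      have e1 : ((mergeAt L k).getD k ∅).filter (· ≤ j) = L.getD k ∅ := by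
        ext x
        simp only [hMk, Finset.mem_filter, Finset.mem_union]
        constructor
        · rintro ⟨h1 | h1, h2⟩
          · exact h1
          · exact absurd (hmn x h1) (by omega)
        · intro h
          exact ⟨Or.inl h, hmax x h⟩
      have e2 : ((mergeAt L k).getD k ∅).filter (j < ·) = L.getD (k + 1) ∅ := by
        ext x
        simp only [hMk, Finset.mem_filter, Finset.mem_union]
        constructor
        · rintro ⟨h1 | h1, h2⟩
          · exact absurd (hmax x h1) (by omega)
          · exact h1
        · intro h
          have := hmn x h
          exact ⟨Or.inr h, by omega⟩
      rw [e1, e2]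
      exact splitAt'_mergeAt hk
    · -- RightInvOn: ∀ M ∈ Fusd, phi (psi M) = M
      intro M hM
      obtain ⟨hc, j, hmin, k, hk, hjk, hx, hnm⟩ := hM
      rw [psi_eq hc.2.1 hmin hk hjk]
      obtain ⟨h1, h2, h3, h4⟩ := split_spec hc hmin hk hjk hx hnm
      have hkN : k <
          (splitAt' M k ((M.getD k ∅).filter (· ≤ j)) ((M.getD k ∅).filter (j < ·))).length := by
        rw [splitAt'_length hk]; omega
      have hjN : j ∈
          (splitAt' M k ((M.getD k ∅).filter (· ≤ j)) ((M.getD k ∅).filter (j < ·))).getD k ∅ := by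
        rw [splitAt'_getD_k hk, Finset.mem_filter]
        exact ⟨hjk, le_refl j⟩
      rw [phi_eq h1.2.1 h2 hkN hjN]
      exact h4
  · intro L hL
    obtain ⟨hc, j, hmin, k, hk, hjk, hmax, hmn⟩ := hL
    rw [phi_eq hc.2.1 hmin (by omega) hjk, mergeAt_length hk]
end
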